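/- Let P be a positive definite symmetric n×n real matrix and c ∈ ℝⁿ a nonzero vector. Then (cᵀ s ≤ 1 for every s ∈ ℝⁿ with sᵀ P s ≤ 1) if and only if cᵀ P⁻¹ c ≤ 1. -/
import Mathlib


open Matrix

theorem stmt_3 {n : ℕ} (P : Matrix (Fin n) (Fin n) ℝ) (hP : P.PosDef)
    (c : Fin n → ℝ) (hc : c ≠ 0) :
    (∀ s : Fin n → ℝ, s ⬝ᵥ P.mulVec s ≤ 1 → c ⬝ᵥ s ≤ 1) ↔ c ⬝ᵥ P⁻¹.mulVec c ≤ 1 := by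
  have hPinv : P⁻¹.PosDef := hP.inv
  have hPt : Pᵀ = P := by
    have := hP.isHermitian.eq
    rwa [conjTranspose_eq_transpose_of_trivial] at this
  set q : ℝ := c ⬝ᵥ P⁻¹.mulVec c with hqdef
  have hq : 0 < q := by
    have := hPinv.re_dotProduct_pos hc
    simpa [hqdef] using this
  have hPu : P.mulVec (P⁻¹.mulVec c) = c := by
    rw [mulVec_mulVec, Matrix.mul_nonsing_inv _ (isUnit_iff_ne_zero.mpr hP.det_pos.ne'),
      one_mulVec]
  have hsym : ∀ x y : Fin n → ℝ, x ⬝ᵥ P.mulVec y = y ⬝ᵥ P.mulVec x := by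
    intro x y
    rw [dotProduct_comm, Matrix.dotProduct_mulVec, ← mulVec_transpose, hPt]
  have e3 : P⁻¹.mulVec c ⬝ᵥ c = q := by rw [dotProduct_comm]
  constructor
  · intro h
    set s : Fin n → ℝ := (Real.sqrt q)⁻¹ • P⁻¹.mulVec c with hs
    have hsq : Real.sqrt q ≠ 0 := by positivity
    have h1 : s ⬝ᵥ P.mulVec s = 1 := by
      rw [hs, mulVec_smul, hPu, smul_dotProduct, dotProduct_smul, smul_eq_mul,
        smul_eq_mul, e3, ← mul_assoc, ← mul_inv, Real.mul_self_sqrt hq.le,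
        inv_mul_cancel₀ hq.ne']
    have h2 : c ⬝ᵥ s = Real.sqrt q := by
      rw [hs, dotProduct_smul, ← hqdef, smul_eq_mul, inv_mul_eq_div, Real.div_sqrt]
    have := h s h1.le
    rw [h2] at this
    calc q = Real.sqrt q * Real.sqrt q := (Real.mul_self_sqrt hq.le).symm
    _ ≤ 1 * 1 := mul_le_mul this this (Real.sqrt_nonneg q) zero_le_one
    _ = 1 := one_mul 1
  · intro hq1 s hs1
    have hsPs : 0 ≤ s ⬝ᵥ P.mulVec s := hP.posSemidef.re_dotProduct_nonneg s
    have e1 : P⁻¹.mulVec c ⬝ᵥ P.mulVec s = c ⬝ᵥ s := by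
      rw [hsym, hPu, dotProduct_comm]
    have key : ∀ t : ℝ, 0 ≤ q * (t * t) + (-2 * (c ⬝ᵥ s)) * t + s ⬝ᵥ P.mulVec s := by
      intro t
      have h0 : 0 ≤ (s - t • P⁻¹.mulVec c) ⬝ᵥ P.mulVec (s - t • P⁻¹.mulVec c) :=
        hP.posSemidef.re_dotProduct_nonneg _
      have e2 : s ⬝ᵥ c = c ⬝ᵥ s := dotProduct_comm s c
      have hexp : (s - t • P⁻¹.mulVec c) ⬝ᵥ P.mulVec (s - t • P⁻¹.mulVec c)
          = q * (t * t) + (-2 * (c ⬝ᵥ s)) * t + s ⬝ᵥ P.mulVec s := by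
        simp only [mulVec_sub, mulVec_smul, hPu, sub_dotProduct, dotProduct_sub,
          smul_dotProduct, dotProduct_smul, smul_eq_mul, e1, e2, e3]
        ring
      rw [← hexp]; exact h0
    have hdisc := discrim_le_zero key
    rw [discrim] at hdisc
    nlinarith [sq_nonneg (c ⬝ᵥ s - 1), mul_le_one₀ hq1 hsPs hs1]
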